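/- For every real n ≥ 3, with h(x) = x/(2·log(e·x)), one has h(n/3) + h(2n/3) − h(n) ≥ n/(4·(log(e·n))²). -/

import Mathlib

namespace Paper

/-- A separator of a graph `G`: a pair `(A,B)` of vertex sets covering `V(G)` with no
edge between `A \ B` and `B \ A`. -/
def IsSeparator {V : Type*} (G : SimpleGraph V) (A B : Set V) : Prop :=
  A ∪ B = Set.univ ∧ ∀ a ∈ A \ B, ∀ b ∈ B \ A, ¬ G.Adj a b

/-- The order of a separator `(A,B)` is `|A ∩ B|`. -/
noncomputable def sepOrder {V : Type*} (A B : Set V) : ℕ := Nat.card ↥(A ∩ B)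

/-- A balanced separator: both `|A \ B|` and `|B \ A|` are at most `2|V(G)|/3`. -/
def IsBalancedSeparator {V : Type*} (G : SimpleGraph V) (A B : Set V) : Prop :=
  IsSeparator G A B ∧ 3 * Nat.card ↥(A \ B) ≤ 2 * Nat.card V ∧
    3 * Nat.card ↥(B \ A) ≤ 2 * Nat.card V

/-- `G` is an `α`-expander: every set `A` with `|A| ≤ |V|/2` has at least `α|A|`
outside neighbours. -/
def IsExpander {V : Type*} (G : SimpleGraph V) (α : ℝ) : Prop :=
  ∀ A : Set V, 2 * Nat.card ↥A ≤ Nat.card V →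
    α * (Nat.card ↥A : ℝ) ≤ (Nat.card ↥{v | v ∉ A ∧ ∃ a ∈ A, G.Adj v a} : ℝ)

/-- A tree decomposition of `G` with bags `β` indexed by the vertices of a tree `T`. -/
def IsTreeDecomp {V ι : Type*} (G : SimpleGraph V) (T : SimpleGraph ι) (β : ι → Set V) : Prop :=
  T.IsTree ∧ (∀ v : V, ∃ i, v ∈ β i) ∧
    (∀ u v : V, G.Adj u v → ∃ i, u ∈ β i ∧ v ∈ β i) ∧
    (∀ v : V, (T.induce {i | v ∈ β i}).Connected)

/-- The treewidth of `G`: the least `k` admitting a tree decomposition with bags of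
size at most `k + 1`. -/
noncomputable def treewidth {V : Type*} (G : SimpleGraph V) : ℕ :=
  sInf {k | ∃ (ι : Type) (T : SimpleGraph ι) (β : ι → Set V),
    Finite ι ∧ IsTreeDecomp G T β ∧ ∀ i, Nat.card ↥(β i) ≤ k + 1}

/-- `H` is a minor of `G`: branch sets are nonempty, connected, pairwise disjoint,
and adjacency of `H` is realized by edges of `G` between branch sets. -/
def IsMinor {W V : Type*} (H : SimpleGraph W) (G : SimpleGraph V) : Prop :=
  ∃ φ : W → Set V, (∀ w, (φ w).Nonempty) ∧ (∀ w, (G.induce (φ w)).Connected) ∧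
    (Pairwise fun w w' => Disjoint (φ w) (φ w')) ∧
    ∀ w w', H.Adj w w' → ∃ a ∈ φ w, ∃ b ∈ φ w', G.Adj a b

/-- `H` is an `r`-minor of `G`: a minor all of whose branch sets have radius at most `r`. -/
def IsRMinor {W V : Type*} (r : ℕ) (H : SimpleGraph W) (G : SimpleGraph V) : Prop :=
  ∃ φ : W → Set V, (∀ w, (φ w).Nonempty) ∧ (∀ w, (G.induce (φ w)).Connected) ∧
    (∀ w, ∃ u : φ w, ∀ v : φ w, (G.induce (φ w)).dist u v ≤ r) ∧
    (Pairwise fun w w' => Disjoint (φ w) (φ w')) ∧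
    ∀ w w', H.Adj w w' → ∃ a ∈ φ w, ∃ b ∈ φ w', G.Adj a b

/-- Every subgraph `H` of `G` (on `n` vertices) has a balanced separator of order at
most `c · n ^ β`. -/
def HasSmallSeparators {V : Type*} (G : SimpleGraph V) (c β : ℝ) : Prop :=
  ∀ (s : Set V) (H : SimpleGraph s), H ≤ G.induce s →
    ∃ A B : Set s, IsBalancedSeparator H A B ∧
      (sepOrder A B : ℝ) ≤ c * (Nat.card ↥s : ℝ) ^ β


/-- For every real `n ≥ 3`, with `h(x) = x/(2·log(e·x))`, one has
`h(n/3) + h(2n/3) − h(n) ≥ n/(4·(log(e·n))²)`. -/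
lemma aux_ineq (A B L : ℝ) (hA : 0 < A) (hB : 0 < B) (hAL : A ≤ L) (hBL : B ≤ L)
    (h : (L - A) + 2 * (L - B) ≥ 3 / 2) :
    1 / (6 * A) + 1 / (3 * B) - 1 / (2 * L) ≥ 1 / (4 * L ^ 2) := by
  have hL : 0 < L := lt_of_lt_of_le hA hAL
  have h1 : 1 / (6 * A) - 1 / (6 * L) ≥ (L - A) / (6 * L ^ 2) := by
    rw [div_sub_div _ _ (by positivity) (by positivity), ge_iff_le,
      div_le_div_iff₀ (by positivity) (by positivity)]
    nlinarith [mul_nonneg (sub_nonneg.2 hAL) (mul_nonneg hA.le hL.le),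
      mul_nonneg (sub_nonneg.2 hAL) (sq_nonneg L)]
  have h2 : 1 / (3 * B) - 1 / (3 * L) ≥ 2 * (L - B) / (6 * L ^ 2) := by
    rw [div_sub_div _ _ (by positivity) (by positivity), ge_iff_le,
      div_le_div_iff₀ (by positivity) (by positivity)]
    nlinarith [mul_nonneg (sub_nonneg.2 hBL) (mul_nonneg hB.le hL.le),
      mul_nonneg (sub_nonneg.2 hBL) (sq_nonneg L)]
  have h3 : (L - A) / (6 * L ^ 2) + 2 * (L - B) / (6 * L ^ 2) ≥ 1 / (4 * L ^ 2) := by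
    rw [← add_div, ge_iff_le, div_le_div_iff₀ (by positivity) (by positivity)]
    nlinarith [sq_nonneg L]
  have h4 : 1 / (6 * L) + 1 / (3 * L) = 1 / (2 * L) := by
    field_simp; ring
  linarith

lemma log_sum_bound : Real.log 3 + 2 * Real.log (3 / 2) ≥ 3 / 2 := by
  have hexp : Real.exp (3 / 2 : ℝ) * Real.exp (3 / 2 : ℝ)
      = Real.exp 1 * Real.exp 1 * Real.exp 1 := by
    rw [← Real.exp_add, ← Real.exp_add, ← Real.exp_add]; norm_num
  have h9 := Real.exp_one_lt_d9
  have hp := Real.exp_pos (3 / 2 : ℝ)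
  have hp1 := Real.exp_pos (1 : ℝ)
  have hle : Real.exp (3 / 2 : ℝ) ≤ 27 / 4 := by nlinarith
  have h1 : (3 / 2 : ℝ) ≤ Real.log (27 / 4) := by
    rw [Real.le_log_iff_exp_le (by norm_num)]; exact hle
  have h2 : Real.log (27 / 4 : ℝ) = Real.log 3 + 2 * Real.log (3 / 2) := by
    have : (27 / 4 : ℝ) = 3 * (3 / 2) ^ 2 := by norm_num
    rw [this, Real.log_mul (by norm_num) (by positivity), Real.log_pow]
    push_cast; ring
  linarith [h2 ▸ h1]

theorem h_superadditivity_gain (n : ℝ) (hn : 3 ≤ n) :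
    (n / 3) / (2 * Real.log (Real.exp 1 * (n / 3)))
      + (2 * n / 3) / (2 * Real.log (Real.exp 1 * (2 * n / 3)))
      - n / (2 * Real.log (Real.exp 1 * n))
      ≥ n / (4 * (Real.log (Real.exp 1 * n)) ^ 2) := by
  have hn0 : (0 : ℝ) < n := by linarith
  set L := Real.log (Real.exp 1 * n) with hLdef
  have hL : L = 1 + Real.log n := by
    rw [hLdef, Real.log_mul (Real.exp_ne_zero 1) hn0.ne', Real.log_exp]
  have hlog3 : (1 : ℝ) ≤ Real.log 3 := by
    rw [show (1 : ℝ) = Real.log (Real.exp 1) from (Real.log_exp 1).symm]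
    exact Real.log_le_log (Real.exp_pos 1) (le_of_lt (lt_of_lt_of_le Real.exp_one_lt_d9 (by norm_num)))
  have hlogn : Real.log 3 ≤ Real.log n := Real.log_le_log (by norm_num) hn
  have hlog32 : (0 : ℝ) ≤ Real.log (3 / 2) := Real.log_nonneg (by norm_num)
  have hlog32' : Real.log (3 / 2) ≤ Real.log 3 := Real.log_le_log (by norm_num) (by norm_num)
  have e1 : Real.log (Real.exp 1 * (n / 3)) = L - Real.log 3 := by
    rw [show Real.exp 1 * (n / 3) = (Real.exp 1 * n) / 3 by ring,
      Real.log_div (by positivity) (by norm_num)]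
  have e2 : Real.log (Real.exp 1 * (2 * n / 3)) = L - Real.log (3 / 2) := by
    rw [show Real.exp 1 * (2 * n / 3) = (Real.exp 1 * n) / (3 / 2) by ring,
      Real.log_div (by positivity) (by norm_num)]
  set A := L - Real.log 3 with hAdef
  set B := L - Real.log (3 / 2) with hBdef
  have hA : 0 < A := by rw [hAdef, hL]; linarith
  have hAL : A ≤ L := by rw [hAdef]; linarith
  have hB : 0 < B := by rw [hBdef, hL]; linarith
  have hBL : B ≤ L := by rw [hBdef]; linarith
  have hsum : (L - A) + 2 * (L - B) ≥ 3 / 2 := by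
    rw [hAdef, hBdef]; have := log_sum_bound; linarith
  have hL0 : 0 < L := lt_of_lt_of_le hA hAL
  have key := aux_ineq A B L hA hB hAL hBL hsum
  rw [e1, e2]
  have lhs_eq : (n / 3) / (2 * A) + (2 * n / 3) / (2 * B) - n / (2 * L)
      = n * (1 / (6 * A) + 1 / (3 * B) - 1 / (2 * L)) := by
    field_simp; ring
  have rhs_eq : n / (4 * L ^ 2) = n * (1 / (4 * L ^ 2)) := by ring
  rw [lhs_eq, rhs_eq]
  exact mul_le_mul_of_nonneg_left key hn0.le

end Paper
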